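/- For n ≥ 6, let I_2^{(1,n)} be the ideal of 2×2 minors of the Hankel matrix built from x_1,…,x_n and I_2^{(3,n)} the ideal of 2×2 minors of the Hankel matrix built from x_3,…,x_n, in S = K[x_1,…,x_n]. Then in(I_2^{(1,n)} · I_2^{(3,n)}) ≠ in(I_2^{(1,n)}) · in(I_2^{(3,n)}) with respect to the degree lexicographic order induced by x_1 > ⋯ > x_n. -/

import Mathlib

open MvPolynomial

noncomputable section

/-- Total degree of an exponent vector. -/
def expDeg (u : ℕ →₀ ℕ) : ℕ := u.sum fun _ e => e

/-- Degree lexicographic order induced by `x_1 > x_2 > ⋯` :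
`DegLexLt u v` means the monomial with exponent `u` is strictly smaller than
the one with exponent `v`. -/
def DegLexLt (u v : ℕ →₀ ℕ) : Prop :=
  expDeg u < expDeg v ∨ (expDeg u = expDeg v ∧ toLex u < toLex v)

/-- `u` is the exponent vector of the (unique, strictly largest) leading term of `f`
with respect to degree lexicographic order. -/
def IsLeadMono {K : Type*} [CommRing K] (f : MvPolynomial ℕ K) (u : ℕ →₀ ℕ) : Prop :=
  u ∈ f.support ∧ ∀ v ∈ f.support, v ≠ u → DegLexLt v u

/-- The initial ideal of `I` : the ideal generated by the leading monomials of
elements of `I`. -/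
def initialIdeal {K : Type*} [CommRing K] (I : Ideal (MvPolynomial ℕ K)) :
    Ideal (MvPolynomial ℕ K) :=
  Ideal.span {m | ∃ f ∈ I, ∃ u, IsLeadMono f u ∧ m = monomial u (1 : K)}

/-- `a 1, …, a r` is a chain (1-indexed strictly increasing sequence with gaps ≥ 2). -/
def IsChainOn (r : ℕ) (a : ℕ → ℕ) : Prop := ∀ i, 1 ≤ i → i < r → a i + 1 < a (i + 1)

/-- Exponent vector of the monomial `x_{a 1} ⋯ x_{a r}`. -/
def chainExp (r : ℕ) (a : ℕ → ℕ) : ℕ →₀ ℕ := ∑ i ∈ Finset.Icc 1 r, Finsupp.single (a i) 1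

/-- The maximal minor of a Hankel matrix whose main diagonal is `x_{a 1}, …, x_{a r}`;
its (i,j) entry (0-indexed) is `x_{a (j+1) + i - j}`. -/
def minorOfChain (K : Type*) [CommRing K] (r : ℕ) (a : ℕ → ℕ) : MvPolynomial ℕ K :=
  (Matrix.of fun i j : Fin r =>
    (X (a ((j : ℕ) + 1) + (i : ℕ) - (j : ℕ)) : MvPolynomial ℕ K)).det

/-- The chain `a` is the diagonal chain of a maximal minor of the Hankel matrix with
`r` rows built from the variables `x_lo, …, x_hi`. -/
def FitsHankel (lo hi r : ℕ) (a : ℕ → ℕ) : Prop :=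
  IsChainOn r a ∧ ∀ j, 1 ≤ j → j ≤ r → lo + (j - 1) ≤ a j ∧ a j + (r - j) ≤ hi

/-- The ideal of maximal minors of the Hankel matrix with `r` rows on `x_lo, …, x_hi`. -/
def hankelIdeal (K : Type*) [CommRing K] (lo hi r : ℕ) : Ideal (MvPolynomial ℕ K) :=
  Ideal.span {f | ∃ a : ℕ → ℕ, FitsHankel lo hi r a ∧ f = minorOfChain K r a}

/-- `Interval(a) = ⋃_{2 ≤ i ≤ r} {a_i - 1, a_i}`. -/
def IntervalOf (r : ℕ) (a : ℕ → ℕ) : Set ℕ :=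
  {x | ∃ i, 2 ≤ i ∧ i ≤ r ∧ (x = a i - 1 ∨ x = a i)}

/- Control functions with Δ = 0. -/
def omegaD (r s : ℕ) : ℕ := if r < s then r else s - 1
def omegaC (r s : ℕ) : ℕ := if r ≤ s then r else s
def omegaAD (r s : ℕ) : ℕ := if r ≤ s then r - 1 else s

/-- The three standard-form conditions for a pair of chains, with bounds
`d = Ω_d`, `c = Ω_c`, `ad = Ω_ad`. -/
def StdPairCond (d c ad r s : ℕ) (a b : ℕ → ℕ) : Prop :=
  ((∀ i, 1 ≤ i → i ≤ d → a i ≤ b (i + 1)) ∨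
    (∃ h, 1 ≤ h ∧ h ≤ d ∧ b (h + 1) < a h ∧
      ∀ i, h ≤ i → i ≤ d → a i ∈ IntervalOf s b)) ∧
  ((∀ i, 1 ≤ i → i ≤ c → a i ≤ b i) ∨
    (∃ h, 1 ≤ h ∧ h ≤ c ∧ b h < a h ∧
      ∀ i, h ≤ i → i ≤ c → a i ∈ IntervalOf s b)) ∧
  ((∀ i, 1 ≤ i → i ≤ ad → b i ≤ a (i + 1)) ∨
    (∃ h, 1 ≤ h ∧ h ≤ ad ∧ a (h + 1) < b h ∧
      ∀ i, h ≤ i → i ≤ ad → b i ∈ IntervalOf r a))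

/-- Standard form for a pair of (unlabeled) chains, with Δ = 0. -/
def StdPair (r s : ℕ) (a b : ℕ → ℕ) : Prop :=
  StdPairCond (omegaD r s) (omegaC r s) (omegaAD r s) r s a b

def HasDiagRel (r s : ℕ) (a b : ℕ → ℕ) : Prop :=
  ∃ h k, 1 ≤ h ∧ h ≤ omegaD r s ∧ h + 1 ≤ k ∧ k ≤ s ∧ b k < a h ∧ a h ∉ IntervalOf s b

def HasColRel (r s : ℕ) (a b : ℕ → ℕ) : Prop :=
  ∃ h, 1 ≤ h ∧ h ≤ omegaC r s ∧ b h < a h ∧ a h ∉ IntervalOf s b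

def HasADRel (r s : ℕ) (a b : ℕ → ℕ) : Prop :=
  ∃ h k, 1 ≤ h ∧ h ≤ omegaAD r s ∧ h + 1 ≤ k ∧ k ≤ r ∧ a k < b h ∧ b h ∉ IntervalOf r a

/-- A diagonal relation move (swap of a block of entries), with Ω_d bound `d`. -/
def DiagMoveP (d s : ℕ) (a b a' b' : ℕ → ℕ) : Prop :=
  ∃ h k v, 1 ≤ h ∧ h ≤ d ∧ h + 1 ≤ k ∧ k ≤ s ∧ b k < a h ∧ a h ∉ IntervalOf s b ∧
    v ≤ h - 1 ∧ (∀ i, i ≤ v → b (k - i) < a (h - i)) ∧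
    (v ≠ h - 1 → a (h - v - 1) ≤ b (k - v - 1)) ∧
    (∀ i, a' i = if h - v ≤ i ∧ i ≤ h then b (i + k - h) else a i) ∧
    (∀ i, b' i = if k - v ≤ i ∧ i ≤ k then a (i + h - k) else b i)

/-- A column-wise relation move, with Ω_c bound `c`. -/
def ColMoveP (c s : ℕ) (a b a' b' : ℕ → ℕ) : Prop :=
  ∃ h v, 1 ≤ h ∧ h ≤ c ∧ b h < a h ∧ a h ∉ IntervalOf s b ∧
    v ≤ h - 1 ∧ (∀ i, i ≤ v → b (h - i) < a (h - i)) ∧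
    (v ≠ h - 1 → a (h - v - 1) ≤ b (h - v - 1)) ∧
    (∀ i, a' i = if h - v ≤ i ∧ i ≤ h then b i else a i) ∧
    (∀ i, b' i = if h - v ≤ i ∧ i ≤ h then a i else b i)

/-- An anti-diagonal relation move, with Ω_ad bound `ad`. -/
def ADMoveP (ad r : ℕ) (a b a' b' : ℕ → ℕ) : Prop :=
  ∃ h k v, 1 ≤ h ∧ h ≤ ad ∧ h + 1 ≤ k ∧ k ≤ r ∧ a k < b h ∧ b h ∉ IntervalOf r a ∧
    v ≤ h - 1 ∧ (∀ i, i ≤ v → a (k - i) < b (h - i)) ∧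
    (v ≠ h - 1 → b (h - v - 1) ≤ a (k - v - 1)) ∧
    (∀ i, a' i = if k - v ≤ i ∧ i ≤ k then b (i + h - k) else a i) ∧
    (∀ i, b' i = if h - v ≤ i ∧ i ≤ h then a (i + k - h) else b i)

/-- A relation move on a pair of (unlabeled) chains (Δ = 0). -/
def Move (r s : ℕ) (a b a' b' : ℕ → ℕ) : Prop :=
  DiagMoveP (omegaD r s) s a b a' b' ∨ ColMoveP (omegaC r s) s a b a' b' ∨
    ADMoveP (omegaAD r s) r a b a' b'

/- Labels and labeled chains, for the family of close cuts. -/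
def IsLabel (n : ℕ) (σ : ℕ × ℕ) : Prop :=
  σ = (1, n) ∨ σ = (1, n - 1) ∨ σ = (2, n) ∨ σ = (2, n - 1)

def LabeledChain (n : ℕ) (σ : ℕ × ℕ) (r : ℕ) (a : ℕ → ℕ) : Prop :=
  IsLabel n σ ∧ 1 ≤ r ∧ FitsHankel σ.1 σ.2 r a

/-- Order of labels: (1,n-1) > (1,n) > (2,n-1) > (2,n). -/
def labelRank (n : ℕ) (σ : ℕ × ℕ) : ℕ :=
  if σ = (1, n - 1) then 3 else if σ = (1, n) then 2 else if σ = (2, n - 1) then 1 else 0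

/-- `(σ,a) ≥_c (γ,b)`. -/
def GeC (n : ℕ) (σ : ℕ × ℕ) (r : ℕ) (a : ℕ → ℕ) (γ : ℕ × ℕ) (s : ℕ) (b : ℕ → ℕ) : Prop :=
  labelRank n γ < labelRank n σ ∨
    (σ = γ ∧ (chainExp s b = chainExp r a ∨ DegLexLt (chainExp s b) (chainExp r a)))

/-- The function Δ for a pair of labeled chains. -/
def delta (n : ℕ) (σ γ : ℕ × ℕ) (r s : ℕ) (a b : ℕ → ℕ) : ℕ :=
  if (r ≤ s ∧ a r = n ∧ γ.2 = n - 1) ∨ (s < r ∧ b s = n ∧ σ.2 = n - 1) then 1 else 0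

def omegaD' (Δ r s : ℕ) : ℕ := if r < s then r - Δ else s - 1
def omegaC' (Δ r s : ℕ) : ℕ := if r ≤ s then r - Δ else s
def omegaAD' (Δ r s : ℕ) : ℕ := if r ≤ s then r - 1 else s - Δ

/-- Standard form for a pair of labeled chains `(σ,a) ≥_c (γ,b)`. -/
def StdPairL (n : ℕ) (σ γ : ℕ × ℕ) (r s : ℕ) (a b : ℕ → ℕ) : Prop :=
  StdPairCond (omegaD' (delta n σ γ r s a b) r s) (omegaC' (delta n σ γ r s a b) r s)
    (omegaAD' (delta n σ γ r s a b) r s) r s a b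

/-- A relation move on a pair of labeled chains (Δ as prescribed by the labels). -/
def MoveL (n : ℕ) (σ γ : ℕ × ℕ) (r s : ℕ) (a b a' b' : ℕ → ℕ) : Prop :=
  DiagMoveP (omegaD' (delta n σ γ r s a b) r s) s a b a' b' ∨
  ColMoveP (omegaC' (delta n σ γ r s a b) r s) s a b a' b' ∨
  ADMoveP (omegaAD' (delta n σ γ r s a b) r s) r a b a' b'

/-- A tabel with `l` rows: row `i` (1 ≤ i ≤ l) is the labeled chain
`(lab i, ent i)` of length `len i`, and the rows are ordered decreasingly by `≥_c`. -/
def IsTabel (n l : ℕ) (lab : ℕ → ℕ × ℕ) (len : ℕ → ℕ) (ent : ℕ → ℕ → ℕ) : Prop :=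
  (∀ i, 1 ≤ i → i ≤ l → LabeledChain n (lab i) (len i) (ent i)) ∧
  (∀ i, 1 ≤ i → i < l →
    GeC n (lab i) (len i) (ent i) (lab (i + 1)) (len (i + 1)) (ent (i + 1)))

/-- A tabel is a standard form: the standard-form conditions hold for each
pair of rows `i < j`. -/
def StdTabel (n l : ℕ) (lab : ℕ → ℕ × ℕ) (len : ℕ → ℕ) (ent : ℕ → ℕ → ℕ) : Prop :=
  ∀ i j, 1 ≤ i → i < j → j ≤ l →
    StdPairL n (lab i) (lab j) (len i) (len j) (ent i) (ent j)

/-- Standardness of a quadratic factor `x_i · z_{σ,a}` (condition (ii) of the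
standard-monomial construction). -/
def XZStd (i : ℕ) (σ : ℕ × ℕ) (r : ℕ) (a : ℕ → ℕ) : Prop :=
  i ≤ a 1 ∨ (a 1 < i ∧ (σ.2 < i ∨ i ∈ IntervalOf r a))

namespace Stmt18Aux

open Finsupp MvPolynomial

variable {K : Type*} [Field K]

/-- substitution `x_j ↦ x_j` for `j < lo`, `x_j ↦ y z^j` for `j ≥ lo`. -/
noncomputable def phi (K : Type*) [CommRing K] (lo : ℕ) :
    MvPolynomial ℕ K →ₐ[K] MvPolynomial (ℕ ⊕ Fin 2) K :=
  aeval (fun j => if j < lo then X (Sum.inl j) else X (Sum.inr 0) * X (Sum.inr 1) ^ j)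

def clTerm (lo k e : ℕ) : (ℕ ⊕ Fin 2) →₀ ℕ :=
  if k < lo then single (Sum.inl k) e
  else single (Sum.inr 0) e + single (Sum.inr 1) (k * e)

lemma clTerm_zero (lo k : ℕ) : clTerm lo k 0 = 0 := by
  unfold clTerm; split_ifs <;> simp

lemma clTerm_add (lo k e₁ e₂ : ℕ) :
    clTerm lo k (e₁ + e₂) = clTerm lo k e₁ + clTerm lo k e₂ := by
  unfold clTerm; split_ifs <;> simp [Finsupp.single_add, mul_add] <;> abel

/-- the "class" of an exponent vector under `phi`. -/
def cl (lo : ℕ) (v : ℕ →₀ ℕ) : (ℕ ⊕ Fin 2) →₀ ℕ := v.sum (clTerm lo)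

lemma phi_monomial (lo : ℕ) (v : ℕ →₀ ℕ) (c : K) :
    phi K lo (monomial v c) = monomial (cl lo v) c := by
  rw [phi, aeval_monomial]
  have h : ∀ (s : Finset ℕ), (∏ k ∈ s,
      (if k < lo then (X (Sum.inl k) : MvPolynomial (ℕ ⊕ Fin 2) K)
        else X (Sum.inr 0) * X (Sum.inr 1) ^ k) ^ v k)
      = monomial (∑ k ∈ s, clTerm lo k (v k)) 1 := by
    intro s
    induction s using Finset.cons_induction with
    | empty => simp [monomial_zero']
    | cons a s ha ih =>
      rw [Finset.prod_cons, Finset.sum_cons, ih, clTerm]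
      split_ifs with h'
      · rw [X_pow_eq_monomial, monomial_mul, one_mul]
      · rw [mul_pow, ← pow_mul, X_pow_eq_monomial, X_pow_eq_monomial, monomial_mul,
          monomial_mul, one_mul, one_mul, add_assoc, mul_comm (a) (v a)]
  rw [Finsupp.prod, h, cl, Finsupp.sum, algebraMap_eq, C_mul_monomial, mul_one]

lemma phi_eq_sum (lo : ℕ) (f : MvPolynomial ℕ K) :
    phi K lo f = ∑ v ∈ f.support, monomial (cl lo v) (coeff v f) := by
  conv_lhs => rw [f.as_sum]
  rw [map_sum]
  exact Finset.sum_congr rfl fun v _ => phi_monomial lo v _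

/-- if `phi f = 0` then the lead monomial has a classmate in the support. -/
lemma exists_classmate (lo : ℕ) (f : MvPolynomial ℕ K) (u : ℕ →₀ ℕ)
    (hf : phi K lo f = 0) (hu : u ∈ f.support) :
    ∃ v ∈ f.support, v ≠ u ∧ cl lo v = cl lo u := by
  by_contra hcon
  push_neg at hcon
  have h0 : coeff (cl lo u) (phi K lo f) = coeff u f := by
    rw [phi_eq_sum]
    rw [coeff_sum]
    rw [Finset.sum_eq_single u]
    · simp [coeff_monomial]
    · intro v hv hvu
      rw [coeff_monomial, if_neg (hcon v hv hvu)]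
    · intro h; exact (h hu).elim
  rw [hf] at h0
  simp only [coeff_zero] at h0
  exact (MvPolynomial.mem_support_iff.mp hu) h0.symm

end Stmt18Aux
namespace Stmt18Aux2
open Finsupp MvPolynomial Stmt18Aux

variable {K : Type*} [Field K]

lemma cl_inl (lo : ℕ) (v : ℕ →₀ ℕ) (j : ℕ) (hj : j < lo) :
    cl lo v (Sum.inl j) = v j := by
  rw [cl, Finsupp.sum_apply]
  have h : ∀ k e, clTerm lo k e (Sum.inl j) = if k = j then e else 0 := by
    intro k e
    unfold clTerm
    split_ifs with h1 h2 h2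
    · subst h2; simp [Finsupp.single_apply]
    · rw [Finsupp.single_apply, if_neg (by simp [Sum.inl.injEq]; omega)]
    · omega
    · simp [Finsupp.single_apply]
  rw [Finsupp.sum, Finset.sum_congr rfl (fun k _ => h k (v k)),
    Finset.sum_ite_eq' v.support j (fun k => v k)]
  split_ifs with h'
  · rfl
  · exact (Finsupp.notMem_support_iff.mp h').symm

lemma cl_inr0 (lo : ℕ) (v : ℕ →₀ ℕ) (T : Finset ℕ) (hT : v.support ⊆ T) :
    cl lo v (Sum.inr 0) = ∑ k ∈ T, if lo ≤ k then v k else 0 := by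
  rw [cl, Finsupp.sum_apply]
  have h : ∀ k e, clTerm lo k e (Sum.inr (0 : Fin 2)) = if lo ≤ k then e else 0 := by
    intro k e
    unfold clTerm
    split_ifs with h1 h2 h2 <;>
      simp_all [Finsupp.single_apply, Finsupp.add_apply]
    omega
  rw [Finsupp.sum, Finset.sum_congr rfl (fun k _ => h k (v k)), Finset.sum_subset hT]
  intro x _ hx
  rw [Finsupp.notMem_support_iff.mp hx]
  simp

lemma cl_inr1 (lo : ℕ) (v : ℕ →₀ ℕ) (T : Finset ℕ) (hT : v.support ⊆ T) :
    cl lo v (Sum.inr 1) = ∑ k ∈ T, if lo ≤ k then k * v k else 0 := by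
  rw [cl, Finsupp.sum_apply]
  have h : ∀ k e, clTerm lo k e (Sum.inr (1 : Fin 2)) = if lo ≤ k then k * e else 0 := by
    intro k e
    unfold clTerm
    split_ifs with h1 h2 h2 <;>
      simp_all [Finsupp.single_apply, Finsupp.add_apply]
    omega
  rw [Finsupp.sum, Finset.sum_congr rfl (fun k _ => h k (v k)), Finset.sum_subset hT]
  intro x _ hx
  rw [Finsupp.notMem_support_iff.mp hx]
  simp

lemma lead_has_gap (lo : ℕ) (f : MvPolynomial ℕ K) (u : ℕ →₀ ℕ)
    (hf : phi K lo f = 0) (hl : IsLeadMono f u) :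
    ∃ a b, lo ≤ a ∧ a + 2 ≤ b ∧ 1 ≤ u a ∧ 1 ≤ u b := by
  by_contra hno
  push_neg at hno
  obtain ⟨v, hv, hvu, hcl⟩ := exists_classmate lo f u hf hl.1
  have hne : ∃ j, u j ≠ v j := by
    by_contra h; push_neg at h
    exact hvu (Finsupp.ext fun j => (h j).symm)
  have hj0 : u (Nat.find hne) ≠ v (Nat.find hne) := Nat.find_spec hne
  set j0 := Nat.find hne with hj0def
  have hpre : ∀ k < j0, u k = v k := fun k hk => by
    have := Nat.find_min hne hk; simpa using this
  have hloj0 : lo ≤ j0 := by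
    by_contra h
    push_neg at h
    have h1 : cl lo v (Sum.inl j0) = cl lo u (Sum.inl j0) := by rw [hcl]
    rw [cl_inl lo v j0 h, cl_inl lo u j0 h] at h1
    exact hj0 h1.symm
  set T := u.support ∪ v.support with hTdef
  have hTu : u.support ⊆ T := Finset.subset_union_left
  have hTv : v.support ⊆ T := Finset.subset_union_right
  have hD : (∑ k ∈ T, if lo ≤ k then v k else 0)
      = ∑ k ∈ T, if lo ≤ k then u k else 0 := by
    rw [← cl_inr0 lo v T hTv, ← cl_inr0 lo u T hTu, hcl]
  have hW : (∑ k ∈ T, if lo ≤ k then k * v k else 0)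
      = ∑ k ∈ T, if lo ≤ k then k * u k else 0 := by
    rw [← cl_inr1 lo v T hTv, ← cl_inr1 lo u T hTu, hcl]
  have hdeg : expDeg u = expDeg v := by
    have h1 : expDeg u = ∑ k ∈ T, u k :=
      Finsupp.sum_of_support_subset u hTu _ (fun _ _ => rfl)
    have h2 : expDeg v = ∑ k ∈ T, v k :=
      Finsupp.sum_of_support_subset v hTv _ (fun _ _ => rfl)
    have h3 : ∀ (x : ℕ →₀ ℕ), (∑ k ∈ T, x k)
        = (∑ k ∈ T, if lo ≤ k then x k else 0) + ∑ k ∈ T, if lo ≤ k then 0 else x k := by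
      intro x
      rw [← Finset.sum_add_distrib]
      exact Finset.sum_congr rfl fun k _ => by split_ifs <;> omega
    rw [h1, h2, h3, h3, hD]
    congr 1
    exact Finset.sum_congr rfl fun k _ => by
      split_ifs with h'
      · rfl
      · exact hpre k (by omega)
  rcases hl.2 v hv hvu with hlt | ⟨hdeq, hlex⟩
  · omega
  · rw [Finsupp.Lex.lt_iff] at hlex
    obtain ⟨i, hprefix, hi⟩ := hlex
    simp only [ofLex_toLex] at hprefix hi
    have hij0 : j0 ≤ i := Nat.find_min' hne (by omega)
    have hij0' : i ≤ j0 := by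
      by_contra h
      push_neg at h
      exact hj0 (hprefix j0 h).symm
    have hieq : i = j0 := le_antisymm hij0' hij0
    subst hieq
    -- now v j0 < u j0 : hi ; derive arithmetic contradiction
    have huj0 : 1 ≤ u j0 := by omega
    have hclose : ∀ k, j0 + 2 ≤ k → u k = 0 := by
      intro k hk
      have := hno j0 k hloj0 hk huj0
      omega
    have hj0T : j0 ∈ T := hTu (Finsupp.mem_support_iff.mpr (by omega))
    have hsplit : ∀ g : ℕ → ℕ, (∑ k ∈ T, if lo ≤ k then g k else 0)
        = (∑ k ∈ T, if lo ≤ k ∧ k < j0 then g k else 0) + g j0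
          + ∑ k ∈ T, if j0 < k then g k else 0 := by
      intro g
      have hmid : (∑ k ∈ T, if k = j0 then g k else 0) = g j0 := by
        rw [Finset.sum_ite_eq' T j0 g, if_pos hj0T]
      rw [← hmid, ← Finset.sum_add_distrib, ← Finset.sum_add_distrib]
      exact Finset.sum_congr rfl fun k _ => by split_ifs <;> omega
    rw [hsplit, hsplit] at hD
    rw [hsplit, hsplit] at hW
    have hP : (∑ k ∈ T, if lo ≤ k ∧ k < j0 then v k else 0)
        = ∑ k ∈ T, if lo ≤ k ∧ k < j0 then u k else 0 :=
      Finset.sum_congr rfl fun k _ => by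
        split_ifs with h'
        · exact (hpre k h'.2).symm
        · rfl
    have hQ : (∑ k ∈ T, if lo ≤ k ∧ k < j0 then k * v k else 0)
        = ∑ k ∈ T, if lo ≤ k ∧ k < j0 then k * u k else 0 :=
      Finset.sum_congr rfl fun k _ => by
        split_ifs with h'
        · rw [hpre k h'.2]
        · rfl
    have hWu : (∑ k ∈ T, if j0 < k then k * u k else 0)
        = (j0 + 1) * ∑ k ∈ T, if j0 < k then u k else 0 := by
      rw [Finset.mul_sum]
      refine Finset.sum_congr rfl fun k _ => ?_
      split_ifs with h'
      · by_cases h0 : u k = 0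
        · rw [h0]; ring
        · have hk2 : k < j0 + 2 := by
            by_contra hh; push_neg at hh; exact h0 (hclose k hh)
          have : k = j0 + 1 := by omega
          rw [this]
      · ring
    have hWv : (j0 + 1) * (∑ k ∈ T, if j0 < k then v k else 0)
        ≤ ∑ k ∈ T, if j0 < k then k * v k else 0 := by
      rw [Finset.mul_sum]
      refine Finset.sum_le_sum fun k _ => ?_
      split_ifs with h'
      · exact Nat.mul_le_mul (by omega) le_rfl
      · simp
    rw [hP] at hD
    rw [hQ] at hW
    set Du := ∑ k ∈ T, if j0 < k then u k else 0
    set Dv := ∑ k ∈ T, if j0 < k then v k else 0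
    set Wu := ∑ k ∈ T, if j0 < k then k * u k else 0
    set Wv := ∑ k ∈ T, if j0 < k then k * v k else 0
    have hDv : v j0 + Dv = u j0 + Du := by omega
    have hmul : (j0 + 1) * (v j0 + Dv) = (j0 + 1) * (u j0 + Du) := by rw [hDv]
    have h1 : (j0+1) * (v j0) + (j0+1) * Dv = (j0+1) * (u j0) + (j0+1) * Du := by
      rw [← mul_add, ← mul_add]; exact hmul
    nlinarith [hW, hWu, hWv, hi, h1]

end Stmt18Aux2
namespace Stmt18Aux3
open Finsupp MvPolynomial Stmt18Aux Stmt18Aux2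
open scoped Pointwise

variable {K : Type*} [Field K]

lemma minor_eq (r : ℕ) (a : ℕ → ℕ) (hr : r = 2) :
    minorOfChain K 2 a = X (a 1) * X (a 2) - X (a 2 - 1) * X (a 1 + 1) := by
  rw [minorOfChain, Matrix.det_fin_two]
  simp [Matrix.of_apply]

lemma phi_minor (lo n : ℕ) (hlo : 1 ≤ lo) (a : ℕ → ℕ) (ha : FitsHankel lo n 2 a) :
    phi K lo (minorOfChain K 2 a) = 0 := by
  obtain ⟨hchain, hbd⟩ := ha
  obtain ⟨h1a, h1b⟩ := hbd 1 le_rfl (by omega)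
  obtain ⟨h2a, h2b⟩ := hbd 2 (by omega) le_rfl
  rw [minor_eq 2 a rfl, map_sub, map_mul, map_mul]
  rw [phi, aeval_X, aeval_X, aeval_X, aeval_X]
  rw [if_neg (by omega), if_neg (by omega), if_neg (by omega), if_neg (by omega)]
  obtain ⟨q, hq⟩ : ∃ q, a 2 = q + 1 := ⟨a 2 - 1, by omega⟩
  rw [hq]
  simp only [Nat.add_sub_cancel]
  ring

lemma phi_hankel (lo n : ℕ) (hlo : 1 ≤ lo) (f : MvPolynomial ℕ K)
    (hf : f ∈ hankelIdeal K lo n 2) : phi K lo f = 0 := by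
  refine Submodule.span_induction ?_ ?_ ?_ ?_ hf
  · rintro x ⟨a, ha, rfl⟩
    exact phi_minor lo n hlo a ha
  · exact map_zero _
  · intro x y _ _ hx hy
    rw [map_add, hx, hy, add_zero]
  · intro c x _ hx
    rw [smul_eq_mul, map_mul, hx, mul_zero]

/-- monomial ideal generated by `x_a x_b` with `lo ≤ a`, `a + 2 ≤ b`. -/
def gapSet (lo : ℕ) : Set (ℕ →₀ ℕ) :=
  {s | ∃ a b : ℕ, lo ≤ a ∧ a + 2 ≤ b ∧ s = single a 1 + single b 1}

noncomputable def gapIdeal (K : Type*) [Field K] (lo : ℕ) : Ideal (MvPolynomial ℕ K) :=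
  Ideal.span ((fun s => monomial s (1 : K)) '' gapSet lo)

lemma initial_le_gap (lo n : ℕ) (hlo : 1 ≤ lo) :
    initialIdeal (hankelIdeal K lo n 2) ≤ gapIdeal K lo := by
  rw [initialIdeal, Ideal.span_le]
  rintro m ⟨f, hf, u, hu, rfl⟩
  obtain ⟨a, b, hab1, hab2, ha, hb⟩ :=
    lead_has_gap lo f u (phi_hankel lo n hlo f hf) hu
  set s : ℕ →₀ ℕ := single a 1 + single b 1 with hs
  have hsu : s ≤ u := by
    rw [Finsupp.le_def]
    intro k
    rw [hs, Finsupp.add_apply, Finsupp.single_apply, Finsupp.single_apply]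
    rcases eq_or_ne a k with rfl | hak
    · rw [if_pos rfl, if_neg (by omega)]; omega
    · rw [if_neg hak]
      rcases eq_or_ne b k with rfl | hbk
      · rw [if_pos rfl]; omega
      · rw [if_neg hbk]; omega
  have : monomial u (1 : K) = monomial s 1 * monomial (u - s) 1 := by
    rw [monomial_mul, one_mul, add_tsub_cancel_of_le hsu]
  rw [this]
  exact Ideal.mul_mem_right _ _
    (Ideal.subset_span ⟨s, ⟨a, b, hab1, hab2, rfl⟩, rfl⟩)

/-- the witness monomial `x_2^2 x_4 x_6`. -/
def u0 : ℕ →₀ ℕ := single 2 2 + single 4 1 + single 6 1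

lemma u0_apply (k : ℕ) :
    u0 k = (if 2 = k then 2 else 0) + (if 4 = k then 1 else 0) + (if 6 = k then 1 else 0) := by
  rw [u0, Finsupp.add_apply, Finsupp.add_apply,
    Finsupp.single_apply, Finsupp.single_apply, Finsupp.single_apply]

lemma mem246 (k : ℕ) (hk : 1 ≤ u0 k) : k = 2 ∨ k = 4 ∨ k = 6 := by
  by_contra h
  push_neg at h
  rw [u0_apply, if_neg (by omega : ¬ (2 = k)), if_neg (by omega : ¬ (4 = k)),
    if_neg (by omega : ¬ (6 = k))] at hk
  omega

lemma u0_not_mem : monomial u0 (1 : K) ∉ gapIdeal K 1 * gapIdeal K 3 := by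
  intro hmem
  rw [gapIdeal, gapIdeal, Ideal.span_mul_span'] at hmem
  have himg : ((fun s => monomial s (1 : K)) '' gapSet 1) * ((fun s => monomial s (1 : K)) '' gapSet 3)
      = (fun s => monomial s (1 : K)) '' (gapSet 1 + gapSet 3) := by
    ext x
    constructor
    · rintro ⟨x₁, ⟨s, hs, rfl⟩, x₂, ⟨t, ht, rfl⟩, rfl⟩
      exact ⟨s + t, ⟨s, hs, t, ht, rfl⟩, by simp [monomial_mul]⟩
    · rintro ⟨w, ⟨s, hs, t, ht, rfl⟩, rfl⟩
      exact ⟨monomial s 1, ⟨s, hs, rfl⟩, monomial t 1, ⟨t, ht, rfl⟩,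
        by simp [monomial_mul]⟩
  rw [himg, mem_ideal_span_monomial_image] at hmem
  have hu0 : u0 ∈ (monomial u0 (1 : K)).support := by
    rw [MvPolynomial.mem_support_iff, coeff_monomial, if_pos rfl]
    exact one_ne_zero
  obtain ⟨w, ⟨s, hs, t, ht, rfl⟩, hle⟩ := hmem u0 hu0
  obtain ⟨a, b, ha1, hab, rfl⟩ := hs
  obtain ⟨c, d, hc3, hcd, rfl⟩ := ht
  rw [Finsupp.le_def] at hle
  set w : ℕ →₀ ℕ := single a 1 + single b 1 + (single c 1 + single d 1) with hw
  have hwval : ∀ k, w k = (Finsupp.single a 1) k + (Finsupp.single b 1) k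
      + ((Finsupp.single c 1) k + (Finsupp.single d 1) k) := by
    intro k; rw [hw]; simp [Finsupp.add_apply]
  have hwa : 1 ≤ u0 a := le_trans (by rw [hwval a, Finsupp.single_eq_same]; omega) (hle a)
  have hwb : 1 ≤ u0 b := le_trans (by rw [hwval b, Finsupp.single_eq_same]; omega) (hle b)
  have hwc : 1 ≤ u0 c := le_trans (by rw [hwval c, Finsupp.single_eq_same]; omega) (hle c)
  have hwd : 1 ≤ u0 d := le_trans (by rw [hwval d, Finsupp.single_eq_same]; omega) (hle d)
  have ha246 := mem246 a hwa
  have hb246 := mem246 b hwb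
  have hc246 := mem246 c hwc
  have hd246 := mem246 d hwd
  have hc4 : c = 4 := by omega
  have hd6 : d = 6 := by omega
  subst hc4 hd6
  have h4 := hle 4
  have h6 := hle 6
  rw [hwval 4, u0_apply] at h4
  rw [hwval 6, u0_apply] at h6
  rcases ha246 with rfl | rfl | rfl <;> rcases hb246 with rfl | rfl | rfl <;>
    simp [Finsupp.single_apply] at h4 h6 hab ⊢
end Stmt18Aux3
namespace Stmt18Aux4
open Finsupp MvPolynomial Stmt18Aux Stmt18Aux2 Stmt18Aux3

variable {K : Type*} [Field K]

def chain (p q : ℕ) : ℕ → ℕ := fun i => if i ≤ 1 then p else q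

lemma chain_minor_eq (p q : ℕ) :
    minorOfChain K 2 (chain p q) = X p * X q - X (q - 1) * X (p + 1) := by
  rw [minor_eq 2 _ rfl]
  norm_num [chain]

lemma fits_chain (lo n p q : ℕ) (hlo : lo ≤ p) (hpq : p + 2 ≤ q) (hq : q ≤ n) :
    FitsHankel lo n 2 (chain p q) := by
  constructor
  · intro i h1 h2
    have : i = 1 := by omega
    subst this
    simp only [chain]
    norm_num
    omega
  · intro j h1 h2
    have : j = 1 ∨ j = 2 := by omega
    rcases this with rfl | rfl <;> simp only [chain] <;> norm_num <;> omega

lemma chain_mem (lo n p q : ℕ) (hlo : lo ≤ p) (hpq : p + 2 ≤ q) (hq : q ≤ n) :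
    minorOfChain K 2 (chain p q) ∈ hankelIdeal K lo n 2 :=
  Ideal.subset_span ⟨chain p q, fits_chain lo n p q hlo hpq hq, rfl⟩

/-- the witness polynomial. -/
noncomputable def fwit (K : Type*) [Field K] : MvPolynomial ℕ K :=
  minorOfChain K 2 (chain 1 5) * minorOfChain K 2 (chain 3 5)
    - minorOfChain K 2 (chain 1 4) * minorOfChain K 2 (chain 3 6)
    + minorOfChain K 2 (chain 1 3) * minorOfChain K 2 (chain 4 6)

def u1 : ℕ →₀ ℕ := single 2 2 + single 5 2
def u2 : ℕ →₀ ℕ := single 2 1 + single 3 2 + single 6 1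
def u3 : ℕ →₀ ℕ := single 2 1 + single 3 1 + single 4 1 + single 5 1
def u4 : ℕ →₀ ℕ := single 2 1 + single 4 3

lemma fwit_eq : fwit K = monomial u0 (-1) + monomial u1 1 + monomial u2 1
    + monomial u3 (-2) + monomial u4 1 := by
  rw [fwit, chain_minor_eq, chain_minor_eq, chain_minor_eq, chain_minor_eq,
    chain_minor_eq, chain_minor_eq]
  norm_num
  rw [u0, u1, u2, u3, u4]
  simp only [add_assoc, monomial_single_add, ← C_mul_X_pow_eq_monomial]
  simp only [map_neg, map_one, map_ofNat, pow_one]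
  ring

lemma u1_ne : u1 ≠ u0 := fun h => by
  have := DFunLike.congr_fun h 4
  simp [u1, u0, Finsupp.add_apply, Finsupp.single_apply] at this

lemma u2_ne : u2 ≠ u0 := fun h => by
  have := DFunLike.congr_fun h 3
  simp [u2, u0, Finsupp.add_apply, Finsupp.single_apply] at this

lemma u3_ne : u3 ≠ u0 := fun h => by
  have := DFunLike.congr_fun h 5
  simp [u3, u0, Finsupp.add_apply, Finsupp.single_apply] at this

lemma u4_ne : u4 ≠ u0 := fun h => by
  have := DFunLike.congr_fun h 4
  simp [u4, u0, Finsupp.add_apply, Finsupp.single_apply] at this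

lemma coeff_u0_fwit : coeff u0 (fwit K) = -1 := by
  rw [fwit_eq, coeff_add, coeff_add, coeff_add, coeff_add,
    coeff_monomial, coeff_monomial, coeff_monomial, coeff_monomial, coeff_monomial,
    if_pos rfl, if_neg u1_ne, if_neg u2_ne, if_neg u3_ne, if_neg u4_ne]
  ring

lemma fwit_support : (fwit K).support ⊆ {u0, u1, u2, u3, u4} := by
  rw [fwit_eq]
  refine MvPolynomial.support_add.trans (Finset.union_subset ?_ ?_)
  · refine MvPolynomial.support_add.trans (Finset.union_subset ?_ ?_)
    · refine MvPolynomial.support_add.trans (Finset.union_subset ?_ ?_)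
      · refine MvPolynomial.support_add.trans (Finset.union_subset ?_ ?_)
        · exact (support_monomial_subset).trans (by intro x hx; simp at hx; simp [hx])
        · exact (support_monomial_subset).trans (by intro x hx; simp at hx; simp [hx])
      · exact (support_monomial_subset).trans (by intro x hx; simp at hx; simp [hx])
    · exact (support_monomial_subset).trans (by intro x hx; simp at hx; simp [hx])
  · exact (support_monomial_subset).trans (by intro x hx; simp at hx; simp [hx])

lemma expDeg_add (x y : ℕ →₀ ℕ) : expDeg (x + y) = expDeg x + expDeg y := by
  rw [expDeg, expDeg, expDeg]
  exact Finsupp.sum_add_index' (fun _ => rfl) (fun _ _ _ => rfl)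

lemma expDeg_single (a e : ℕ) : expDeg (single a e) = e := by
  rw [expDeg]
  exact Finsupp.sum_single_index rfl

lemma u0_deg : expDeg u0 = 4 := by
  rw [u0, expDeg_add, expDeg_add, expDeg_single, expDeg_single, expDeg_single]

lemma u1_lt : DegLexLt u1 u0 := by
  refine Or.inr ⟨?_, ?_⟩
  · rw [u1, u0_deg, expDeg_add, expDeg_single, expDeg_single]
  · rw [Finsupp.Lex.lt_iff]
    refine ⟨4, fun j hj => ?_, ?_⟩
    · simp only [ofLex_toLex]
      interval_cases j <;>
        simp [u1, u0, Finsupp.add_apply, Finsupp.single_apply]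
    · simp only [ofLex_toLex]
      simp [u1, u0, Finsupp.add_apply, Finsupp.single_apply]

lemma u2_lt : DegLexLt u2 u0 := by
  refine Or.inr ⟨?_, ?_⟩
  · rw [u2, u0_deg, expDeg_add, expDeg_add, expDeg_single, expDeg_single, expDeg_single]
  · rw [Finsupp.Lex.lt_iff]
    refine ⟨2, fun j hj => ?_, ?_⟩
    · simp only [ofLex_toLex]
      interval_cases j <;>
        simp [u2, u0, Finsupp.add_apply, Finsupp.single_apply]
    · simp only [ofLex_toLex]
      simp [u2, u0, Finsupp.add_apply, Finsupp.single_apply]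

lemma u3_lt : DegLexLt u3 u0 := by
  refine Or.inr ⟨?_, ?_⟩
  · rw [u3, u0_deg, expDeg_add, expDeg_add, expDeg_add, expDeg_single,
      expDeg_single, expDeg_single, expDeg_single]
  · rw [Finsupp.Lex.lt_iff]
    refine ⟨2, fun j hj => ?_, ?_⟩
    · simp only [ofLex_toLex]
      interval_cases j <;>
        simp [u3, u0, Finsupp.add_apply, Finsupp.single_apply]
    · simp only [ofLex_toLex]
      simp [u3, u0, Finsupp.add_apply, Finsupp.single_apply]

lemma u4_lt : DegLexLt u4 u0 := by
  refine Or.inr ⟨?_, ?_⟩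
  · rw [u4, u0_deg, expDeg_add, expDeg_single, expDeg_single]
  · rw [Finsupp.Lex.lt_iff]
    refine ⟨2, fun j hj => ?_, ?_⟩
    · simp only [ofLex_toLex]
      interval_cases j <;>
        simp [u4, u0, Finsupp.add_apply, Finsupp.single_apply]
    · simp only [ofLex_toLex]
      simp [u4, u0, Finsupp.add_apply, Finsupp.single_apply]

lemma fwit_lead : IsLeadMono (fwit K) u0 := by
  constructor
  · rw [MvPolynomial.mem_support_iff, coeff_u0_fwit]
    exact neg_ne_zero.mpr one_ne_zero
  · intro v hv hvne
    have := fwit_support hv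
    simp only [Finset.mem_insert, Finset.mem_singleton] at this
    rcases this with rfl | rfl | rfl | rfl | rfl
    · exact absurd rfl hvne
    · exact u1_lt
    · exact u2_lt
    · exact u3_lt
    · exact u4_lt

lemma fwit_mem (n : ℕ) (hn : 6 ≤ n) :
    fwit K ∈ hankelIdeal K 1 n 2 * hankelIdeal K 3 n 2 := by
  rw [fwit]
  refine Ideal.add_mem _ (Ideal.sub_mem _ ?_ ?_) ?_
  · exact Ideal.mul_mem_mul (chain_mem 1 n 1 5 (by omega) (by omega) (by omega))
      (chain_mem 3 n 3 5 (by omega) (by omega) (by omega))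
  · exact Ideal.mul_mem_mul (chain_mem 1 n 1 4 (by omega) (by omega) (by omega))
      (chain_mem 3 n 3 6 (by omega) (by omega) (by omega))
  · exact Ideal.mul_mem_mul (chain_mem 1 n 1 3 (by omega) (by omega) (by omega))
      (chain_mem 3 n 4 6 (by omega) (by omega) (by omega))

end Stmt18Aux4
/-- for `n ≥ 6`, `in(I_2^{(1,n)} · I_2^{(3,n)}) ≠
in(I_2^{(1,n)}) · in(I_2^{(3,n)})`. -/
theorem stmt18 {K : Type*} [Field K] (n : ℕ) (hn : 6 ≤ n) :
    initialIdeal (hankelIdeal K 1 n 2 * hankelIdeal K 3 n 2) ≠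
      initialIdeal (hankelIdeal K 1 n 2) * initialIdeal (hankelIdeal K 3 n 2) := by
  intro heq
  have hm : MvPolynomial.monomial Stmt18Aux3.u0 (1 : K)
      ∈ initialIdeal (hankelIdeal K 1 n 2 * hankelIdeal K 3 n 2) :=
    Ideal.subset_span ⟨Stmt18Aux4.fwit K, Stmt18Aux4.fwit_mem n hn,
      Stmt18Aux3.u0, Stmt18Aux4.fwit_lead, rfl⟩
  rw [heq] at hm
  have hle : initialIdeal (hankelIdeal K 1 n 2) * initialIdeal (hankelIdeal K 3 n 2)
      ≤ Stmt18Aux3.gapIdeal K 1 * Stmt18Aux3.gapIdeal K 3 :=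
    Ideal.mul_mono (Stmt18Aux3.initial_le_gap 1 n le_rfl)
      (Stmt18Aux3.initial_le_gap 3 n (by omega))
  exact Stmt18Aux3.u0_not_mem (hle hm)

end
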